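/- Main theorem: Let X be a Banach space, K ⊆ X* weak*-compact convex, B ⊆ K an (I)-generating subset, and P : ℓ∞ → ℓ∞ a map with P(0) = 0. Write P_n(x) = |(Px)(n)|. Assume: (i) each P_n is convex and lower semicontinuous for the topology of pointwise convergence on every bounded subset of ℓ∞; (ii) there is M ≥ 0 with P_n(x+y) ≤ M(P_n(x)+P_n(y)) for all n and all x,y ∈ ℓ∞; (iii) P is norm-continuous at 0. Then for every bounded sequence x = (x_n) in X: sup_{x*∈K} limsup_n P_n(x*(x)) ≤ M · sup_{x*∈B} limsup_n P_n(x*(x)), where x*(x) denotes the sequence (x*(x_n))_n. -/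

import Mathlib

open Filter NormedSpace

/-- The space ℓ∞ of bounded real sequences. -/
noncomputable abbrev Linf : Type := ↥(lp (fun _ : ℕ => ℝ) ⊤)

/-- The topology of pointwise convergence on ℓ∞. -/
noncomputable def tauP : TopologicalSpace Linf :=
  TopologicalSpace.induced (fun x : Linf => (x : ℕ → ℝ)) Pi.topologicalSpace

/-- The weak*-closed convex hull of a set of functionals. -/
noncomputable def wstarClConvHull {X : Type*} [NormedAddCommGroup X] [NormedSpace ℝ X]
    (S : Set (StrongDual ℝ X)) : Set (StrongDual ℝ X) :=
  ⇑StrongDual.toWeakDual ⁻¹' closure (convexHull ℝ (⇑StrongDual.toWeakDual '' S))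

/-- `B` (I)-generates `K` if, whenever `B` is written as a countable union
`B = ⋃ₙ Bₙ`, `K` is the norm-closed convex hull of the union of the
weak*-closed convex hulls of the `Bₙ`. -/
def IGenerates {X : Type*} [NormedAddCommGroup X] [NormedSpace ℝ X]
    (B K : Set (StrongDual ℝ X)) : Prop :=
  ∀ Bn : ℕ → Set (StrongDual ℝ X), B = ⋃ n, Bn n →
    K = closure (convexHull ℝ (⋃ n, wstarClConvHull (Bn n)))

/-- Sublevel sets of relatively lower semicontinuous functions on closed sets are closed. -/
lemma sublevel_closed {α : Type*} [TopologicalSpace α] {T : Set α} (hT : IsClosed T)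
    {φ : α → ℝ} {a : ℝ}
    (h : ∀ g ∈ T, ∀ b < φ g, ∀ᶠ g' in nhdsWithin g T, b < φ g') :
    IsClosed {g | g ∈ T ∧ φ g ≤ a} := by
  set C := {g | g ∈ T ∧ φ g ≤ a} with hC
  have hCT : C ⊆ T := fun g hg => hg.1
  refine isClosed_of_closure_subset fun g hg => ?_
  have hgT : g ∈ T := hT.closure_subset ((closure_mono hCT) hg)
  refine ⟨hgT, ?_⟩
  by_contra h'
  push_neg at h'
  have hev : ∀ᶠ g' in nhdsWithin g T, a < φ g' := h g hgT a h'
  have hne : (nhdsWithin g C).NeBot := mem_closure_iff_nhdsWithin_neBot.1 hg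
  have hev' : ∀ᶠ g' in nhdsWithin g C, a < φ g' :=
    (nhdsWithin_mono g hCT) hev
  obtain ⟨g', hlt', hg'C⟩ := (hev'.and self_mem_nhdsWithin).exists
  exact absurd hg'C.2 (not_le.2 hlt')

lemma tendsto_within_of_cont {α β : Type*} [TopologicalSpace α] [TopologicalSpace β] {f : α → β}
    (hf : Continuous f) {T : Set α} {S : Set β} (h : ∀ a ∈ T, f a ∈ S) (g : α) :
    Filter.Tendsto f (nhdsWithin g T) (nhdsWithin (f g) S) :=
  (hf.continuousAt.continuousWithinAt).tendsto_nhdsWithin h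

set_option maxHeartbeats 2000000 in
/-- Main theorem: if `B` (I)-generates the weak*-compact convex set `K` and
`P : ℓ∞ → ℓ∞` satisfies `P 0 = 0`, each `Pₙ = |(P·)(n)|` is convex and
pointwise-lower-semicontinuous on bounded sets, `Pₙ(x+y) ≤ M(Pₙx + Pₙy)` and
`P` is norm-continuous at `0`, then for every bounded sequence `(x_n)` in `X`
(with `y f` denoting the element `(f(x_n))ₙ` of ℓ∞):
`sup_{f ∈ K} limsup_n Pₙ(f(x)) ≤ M · sup_{f ∈ B} limsup_n Pₙ(f(x))`. -/
theorem main_theorem {X : Type*} [NormedAddCommGroup X] [NormedSpace ℝ X]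
    [CompleteSpace X]
    (K : Set (StrongDual ℝ X)) (hKcomp : IsCompact (⇑StrongDual.toWeakDual '' K))
    (hKconv : Convex ℝ K)
    (B : Set (StrongDual ℝ X)) (hBK : B ⊆ K) (hI : IGenerates B K)
    (P : Linf → Linf) (hP0 : P 0 = 0)
    (hconvex : ∀ n : ℕ, ConvexOn ℝ Set.univ (fun z : Linf => |(P z : ℕ → ℝ) n|))
    (hlsc : ∀ n : ℕ, ∀ S : Set Linf, Bornology.IsBounded S →
      @LowerSemicontinuousOn Linf ℝ tauP _ (fun z : Linf => |(P z : ℕ → ℝ) n|) S)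
    (M : ℝ) (hM : 0 ≤ M)
    (hsub : ∀ (n : ℕ) (z w : Linf),
      |(P (z + w) : ℕ → ℝ) n| ≤ M * (|(P z : ℕ → ℝ) n| + |(P w : ℕ → ℝ) n|))
    (hPcont : ContinuousAt P 0)
    (x : ℕ → X) (R : ℝ) (hR : ∀ n, ‖x n‖ ≤ R)
    (y : StrongDual ℝ X → Linf) (hy : ∀ (f : StrongDual ℝ X) (n : ℕ), (y f : ℕ → ℝ) n = f (x n)) :
    (⨆ f : K, limsup (fun n => ((|(P (y f) : ℕ → ℝ) n| : ℝ) : EReal)) atTop) ≤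
      (M : EReal) * ⨆ f : B, limsup (fun n => ((|(P (y f) : ℕ → ℝ) n| : ℝ) : EReal)) atTop := by
  classical
  -- linearity of y
  have hy_comb : ∀ (a b : ℝ) (f g : StrongDual ℝ X), y (a • f + b • g) = a • y f + b • y g := by
    intro a b f g
    apply lp.ext
    funext k
    rw [lp.coeFn_add, lp.coeFn_smul, lp.coeFn_smul]
    simp only [Pi.add_apply, Pi.smul_apply, smul_eq_mul]
    rw [hy, hy, hy]
    simp
  have hy_sub : ∀ (f g : StrongDual ℝ X), y f - y g = y (f - g) := by
    intro f g
    apply lp.ext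
    funext k
    rw [lp.coeFn_sub]
    simp only [Pi.sub_apply]
    rw [hy, hy, hy]
    simp
  -- case M = 0
  rcases eq_or_lt_of_le hM with hM0 | hMpos
  · have hPz : ∀ (w : Linf) (n : ℕ), |(P w : ℕ → ℝ) n| = 0 := by
      intro w n
      refine le_antisymm ?_ (abs_nonneg _)
      have := hsub n 0 w
      rw [zero_add, ← hM0, zero_mul] at this
      exact this
    have hzero : ∀ f : StrongDual ℝ X,
        limsup (fun n => ((|(P (y f) : ℕ → ℝ) n| : ℝ) : EReal)) atTop = 0 := by
      intro f
      have : (fun n => ((|(P (y f) : ℕ → ℝ) n| : ℝ) : EReal)) = fun _ => (0 : EReal) := by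
        funext n; rw [hPz]; norm_num
      rw [this, limsup_const]
    calc (⨆ f : K, limsup (fun n => ((|(P (y f) : ℕ → ℝ) n| : ℝ) : EReal)) atTop)
        ≤ 0 := iSup_le fun f => le_of_eq (hzero f)
      _ = (M : EReal) * ⨆ f : B, limsup (fun n => ((|(P (y f) : ℕ → ℝ) n| : ℝ) : EReal)) atTop := by
          rw [← hM0]; simp [EReal.zero_mul]
  -- now M > 0
  set L : StrongDual ℝ X → EReal :=
    fun f => limsup (fun n => ((|(P (y f) : ℕ → ℝ) n| : ℝ) : EReal)) atTop with hL
  set c : EReal := ⨆ f : B, L f with hc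
  show (⨆ f : K, L f) ≤ (M : EReal) * c
  have hLnonneg : ∀ f, (0 : EReal) ≤ L f := by
    intro f
    refine le_trans ?_ (Filter.liminf_le_limsup (f := atTop)
      (u := fun n => ((|(P (y f) : ℕ → ℝ) n| : ℝ) : EReal)))
    exact Filter.le_liminf_of_le (by isBoundedDefault)
      (Eventually.of_forall fun n => by exact_mod_cast abs_nonneg _)
  -- B empty case
  rcases Set.eq_empty_or_nonempty B with hBempty | hBne
  · have hKempty : K = ∅ := by
      have := hI (fun _ => (∅ : Set (StrongDual ℝ X))) (by simp [hBempty])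
      simpa [wstarClConvHull, convexHull_empty] using this
    have : IsEmpty K := by rw [hKempty]; exact Set.isEmpty_coe_sort.2 rfl
    rw [iSup_of_empty]
    exact bot_le
  -- c = ⊤ case
  rcases eq_or_ne c ⊤ with hctop | hcnetop
  · rw [hctop, EReal.mul_top_of_pos (by exact_mod_cast hMpos)]
    exact le_top
  have hcnebot : c ≠ ⊥ := by
    obtain ⟨f₀, hf₀⟩ := hBne
    have : (0 : EReal) ≤ c := le_trans (hLnonneg f₀) (le_iSup (fun f : B => L f) ⟨f₀, hf₀⟩)
    intro h; rw [h] at this; exact absurd this (by simp)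
  set c' : ℝ := c.toReal with hc'
  have hcc' : (c' : EReal) = c := EReal.coe_toReal hcnetop hcnebot
  -- it suffices to prove the bound for each f ∈ K
  have key : ∀ f ∈ K, L f ≤ ((M * c' : ℝ) : EReal) := by
    intro f hfK
    refine le_of_not_gt fun hlt => ?_
    obtain ⟨b, hb1, hb2⟩ := EReal.exists_between_coe_real hlt
    have hb1' : M * c' < b := by exact_mod_cast hb1
    set t : ℝ := (b - M * c') / (2 * M) with ht_def
    have ht : 0 < t := div_pos (by linarith) (by linarith)
    have htb : M * (t + (c' + t)) = b := by
      field_simp [ht_def]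
      linear_combination (div_mul_cancel₀ (b - M * c') (by positivity : (2 * M) ≠ 0) : t * (2 * M) = b - M * c')
    -- decomposition of B
    set Bn : ℕ → Set (StrongDual ℝ X) :=
      fun n => {g ∈ B | ∀ k ≥ n, |(P (y g) : ℕ → ℝ) k| ≤ c' + t} with hBn_def
    have hBn : B = ⋃ n, Bn n := by
      ext g
      simp only [Set.mem_iUnion, hBn_def, Set.mem_setOf_eq, Set.mem_sep_iff]
      constructor
      · intro hg
        have hls : L g < ((c' + t : ℝ) : EReal) := by
          calc L g ≤ c := le_iSup (fun f : B => L f) ⟨g, hg⟩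
            _ = (c' : EReal) := hcc'.symm
            _ < ((c' + t : ℝ) : EReal) := by exact_mod_cast (by linarith : c' < c' + t)
        have := Filter.eventually_lt_of_limsup_lt hls
        rw [eventually_atTop] at this
        obtain ⟨n, hn⟩ := this
        exact ⟨n, hg, fun k hk => le_of_lt (by exact_mod_cast hn k hk)⟩
      · rintro ⟨n, hg, -⟩; exact hg
    have hKeq := hI Bn hBn
    -- norm bound on K
    have hbdd : ∃ C : ℝ, 0 ≤ C ∧ ∀ g ∈ K, ‖g‖ ≤ C := by
      have hpt : ∀ z : X, ∃ C, ∀ i : K, ‖(i : StrongDual ℝ X) z‖ ≤ C := by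
        intro z
        have hcomp : IsCompact ((fun φ : WeakDual ℝ X => φ z) '' (⇑StrongDual.toWeakDual '' K)) :=
          hKcomp.image (WeakDual.eval_continuous z)
        obtain ⟨C, hC⟩ := hcomp.isBounded.exists_norm_le
        refine ⟨C, fun i => hC _ ⟨StrongDual.toWeakDual (i : StrongDual ℝ X), ⟨(i : StrongDual ℝ X), i.2, rfl⟩, rfl⟩⟩
      obtain ⟨C, hC⟩ := banach_steinhaus (g := fun i : K => (i : StrongDual ℝ X)) hpt
      refine ⟨max C 0, le_max_right _ _, fun g hg => le_trans (hC ⟨g, hg⟩) (le_max_left _ _)⟩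
    obtain ⟨C, hC0, hC⟩ := hbdd
    set R' : ℝ := max R 0 with hR'_def
    have hR'0 : 0 ≤ R' := le_max_right _ _
    have hynorm : ∀ g : StrongDual ℝ X, ‖y g‖ ≤ ‖g‖ * R' := by
      intro g
      refine lp.norm_le_of_forall_le (mul_nonneg (norm_nonneg _) hR'0) fun k => ?_
      have : ‖(y g : ℕ → ℝ) k‖ = ‖g (x k)‖ := by rw [hy]
      rw [this]
      calc ‖g (x k)‖ ≤ ‖g‖ * ‖x k‖ := g.le_opNorm _
        _ ≤ ‖g‖ * R' := by
            apply mul_le_mul_of_nonneg_left _ (norm_nonneg _)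
            exact le_trans (hR k) (le_max_left _ _)
    -- the bounded set S
    set S : Set Linf := Metric.closedBall 0 (C * R') with hS_def
    have hSbdd : Bornology.IsBounded S := Metric.isBounded_closedBall
    have hYS : ∀ g ∈ K, y g ∈ S := by
      intro g hg
      rw [hS_def, Metric.mem_closedBall, dist_zero_right]
      exact le_trans (hynorm g) (mul_le_mul_of_nonneg_right (hC g hg) hR'0)
    -- T
    set T : Set (WeakDual ℝ X) := ⇑StrongDual.toWeakDual '' K with hT_def
    have hTclosed : IsClosed T := hKcomp.isClosed
    have hTconv : Convex ℝ T :=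
      hKconv.is_linear_image ⟨fun _ _ => rfl, fun _ _ => rfl⟩
    -- the map Yw
    set Yw : WeakDual ℝ X → Linf := fun g => y (StrongDual.toWeakDual.symm g) with hYw_def
    have hYwK : ∀ g ∈ T, Yw g ∈ S := by
      rintro g ⟨g₀, hg₀, rfl⟩
      simpa [hYw_def] using hYS g₀ hg₀
    have hYwcont : @Continuous (WeakDual ℝ X) Linf _ tauP Yw := by
      rw [tauP]
      apply continuous_induced_rng.2
      have h1 : ((fun z : Linf => (z : ℕ → ℝ)) ∘ Yw)
          = fun (g : WeakDual ℝ X) (j : ℕ) => g (x j) := by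
        funext g j
        exact hy _ j
      rw [h1]
      exact continuous_pi fun j => WeakDual.eval_continuous (x j)
    -- linearity of Yw
    have hYw_comb : ∀ (a b : ℝ) (g h : WeakDual ℝ X),
        Yw (a • g + b • h) = a • Yw g + b • Yw h := by
      intro a b g h
      rw [hYw_def]
      simp only [map_add, map_smul]
      exact hy_comb a b _ _
    -- sublevel sets
    have hClosedConv : ∀ (k : ℕ),
        IsClosed {g | g ∈ T ∧ |(P (Yw g) : ℕ → ℝ) k| ≤ c' + t} ∧ Convex ℝ {g | g ∈ T ∧ |(P (Yw g) : ℕ → ℝ) k| ≤ c' + t} := by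
      intro k
      constructor
      · refine sublevel_closed hTclosed fun g hgT b hb => ?_
        have hmem : Yw g ∈ S := hYwK g hgT
        have hlsc' := hlsc k S hSbdd (Yw g) hmem b hb
        -- hlsc' : ∀ᶠ z in 𝓝[S] (Yw g) (w.r.t. tauP), b < |(P z) k|
        have htend : Tendsto Yw (nhdsWithin g T) (@nhdsWithin Linf tauP (Yw g) S) :=
          @tendsto_within_of_cont (WeakDual ℝ X) Linf _ tauP Yw hYwcont T S hYwK g
        exact htend.eventually hlsc'
      · rintro g ⟨hgT, hgΦ⟩ h ⟨hhT, hhΦ⟩ a b ha hb hab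
        refine ⟨hTconv hgT hhT ha hb hab, ?_⟩
        have := (hconvex k).2 (Set.mem_univ (Yw g)) (Set.mem_univ (Yw h)) ha hb hab
        simp only [smul_eq_mul] at this
        calc |(P (Yw (a • g + b • h)) : ℕ → ℝ) k|
            = |(P (a • Yw g + b • Yw h) : ℕ → ℝ) k| := by rw [hYw_comb]
          _ ≤ a * |(P (Yw g) : ℕ → ℝ) k| + b * |(P (Yw h) : ℕ → ℝ) k| := this
          _ ≤ a * (c' + t) + b * (c' + t) := by
              apply add_le_add
              · exact mul_le_mul_of_nonneg_left hgΦ ha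
              · exact mul_le_mul_of_nonneg_left hhΦ hb
          _ = c' + t := by rw [← add_mul, hab, one_mul]
    -- Claim A
    have claimA : ∀ n, ∀ g ∈ wstarClConvHull (Bn n),
        g ∈ K ∧ ∀ k ≥ n, |(P (y g) : ℕ → ℝ) k| ≤ c' + t := by
      intro n g hg
      rw [wstarClConvHull, Set.mem_preimage] at hg
      have hsubT : closure (convexHull ℝ (⇑StrongDual.toWeakDual '' Bn n)) ⊆ T := by
        apply closure_minimal _ hTclosed
        apply convexHull_min _ hTconv
        exact Set.image_mono (fun g' hg' => hBK hg'.1)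
      have hgK : g ∈ K := by
        obtain ⟨g₀, hg₀, hge⟩ := hsubT hg
        rwa [← StrongDual.toWeakDual.injective hge]
      refine ⟨hgK, fun k hk => ?_⟩
      have hsubC : closure (convexHull ℝ (⇑StrongDual.toWeakDual '' Bn n)) ⊆
          {g | g ∈ T ∧ |(P (Yw g) : ℕ → ℝ) k| ≤ c' + t} := by
        apply closure_minimal _ (hClosedConv k).1
        apply convexHull_min _ (hClosedConv k).2
        rintro g' ⟨g₀, hg₀, rfl⟩
        refine ⟨⟨g₀, hBK hg₀.1, rfl⟩, ?_⟩
        have hYg₀ : Yw (StrongDual.toWeakDual g₀) = y g₀ := by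
          simp only [hYw_def, LinearEquiv.symm_apply_apply]
        rw [hYg₀]
        exact hg₀.2 k hk
      have h2 := (hsubC hg).2
      have hYg : Yw (StrongDual.toWeakDual g) = y g := by
        simp only [hYw_def, LinearEquiv.symm_apply_apply]
      rwa [hYg] at h2
    -- Claim B
    have claimB : ∀ g ∈ convexHull ℝ (⋃ n, wstarClConvHull (Bn n)),
        ∃ N, ∀ k ≥ N, |(P (y g) : ℕ → ℝ) k| ≤ c' + t := by
      have hconvA : Convex ℝ {g : StrongDual ℝ X | ∃ N, ∀ k ≥ N, |(P (y g) : ℕ → ℝ) k| ≤ c' + t} := by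
        rintro g ⟨N₁, h₁⟩ h ⟨N₂, h₂⟩ a b ha hb hab
        refine ⟨max N₁ N₂, fun k hk => ?_⟩
        have := (hconvex k).2 (Set.mem_univ (y g)) (Set.mem_univ (y h)) ha hb hab
        simp only [smul_eq_mul] at this
        calc |(P (y (a • g + b • h)) : ℕ → ℝ) k|
            = |(P (a • y g + b • y h) : ℕ → ℝ) k| := by rw [hy_comb]
          _ ≤ a * |(P (y g) : ℕ → ℝ) k| + b * |(P (y h) : ℕ → ℝ) k| := this
          _ ≤ a * (c' + t) + b * (c' + t) := by
              apply add_le_add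
              · exact mul_le_mul_of_nonneg_left
                  (h₁ k (le_trans (le_max_left _ _) hk)) ha
              · exact mul_le_mul_of_nonneg_left
                  (h₂ k (le_trans (le_max_right _ _) hk)) hb
          _ = c' + t := by rw [← add_mul, hab, one_mul]
      intro g hg
      refine convexHull_min ?_ hconvA hg
      rintro g' hg'
      rw [Set.mem_iUnion] at hg'
      obtain ⟨n, hn⟩ := hg'
      exact ⟨n, (claimA n g' hn).2⟩
    -- norm continuity of P at 0
    have hPc : ∃ η > 0, ∀ z : Linf, ‖z‖ < η → ‖P z‖ < t := by
      have h2 : Filter.Tendsto P (nhds 0) (nhds (P 0)) := hPcont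
      rw [hP0, Metric.tendsto_nhds_nhds] at h2
      obtain ⟨η, hη, hball⟩ := h2 t ht
      refine ⟨η, hη, fun z hz => ?_⟩
      have := hball (by rwa [dist_zero_right])
      rwa [dist_zero_right] at this
    obtain ⟨η, hη, hPη⟩ := hPc
    -- approximate f by g in the hull
    have hfcl : f ∈ closure (convexHull ℝ (⋃ n, wstarClConvHull (Bn n))) := by
      rw [← hKeq]; exact hfK
    obtain ⟨g, hghull, hfg⟩ := Metric.mem_closure_iff.1 hfcl (η / (R' + 1))
      (div_pos hη (by linarith))
    obtain ⟨N, hN⟩ := claimB g hghull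
    have hsmall : ‖y f - y g‖ < η := by
      rw [hy_sub]
      calc ‖y (f - g)‖ ≤ ‖f - g‖ * R' := hynorm _
        _ ≤ ‖f - g‖ * (R' + 1) := by
            apply mul_le_mul_of_nonneg_left (by linarith) (norm_nonneg _)
        _ < (η / (R' + 1)) * (R' + 1) := by
            apply mul_lt_mul_of_pos_right _ (by linarith)
            rwa [← dist_eq_norm]
        _ = η := div_mul_cancel₀ η (by linarith)
    have hPdiff : ∀ k, |(P (y f - y g) : ℕ → ℝ) k| ≤ t := by
      intro k
      have h1 : ‖(P (y f - y g) : ℕ → ℝ) k‖ ≤ ‖P (y f - y g)‖ :=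
        lp.norm_apply_le_norm ENNReal.top_ne_zero _ k
      rw [Real.norm_eq_abs] at h1
      exact le_trans h1 (le_of_lt (hPη _ hsmall))
    -- final bound
    have hfinal : ∀ k ≥ N, |(P (y f) : ℕ → ℝ) k| ≤ b := by
      intro k hk
      have heq : (y f - y g) + y g = y f := sub_add_cancel (y f) (y g)
      calc |(P (y f) : ℕ → ℝ) k| = |(P ((y f - y g) + y g) : ℕ → ℝ) k| := by rw [heq]
        _ ≤ M * (|(P (y f - y g) : ℕ → ℝ) k| + |(P (y g) : ℕ → ℝ) k|) := hsub k _ _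
        _ ≤ M * (t + (c' + t)) := by
            apply mul_le_mul_of_nonneg_left _ hM
            exact add_le_add (hPdiff k) (hN k hk)
        _ = b := htb
    have hlim : L f ≤ (b : EReal) := by
      apply Filter.limsup_le_of_le (by isBoundedDefault)
      rw [eventually_atTop]
      exact ⟨N, fun k hk => by exact_mod_cast hfinal k hk⟩
    exact absurd hb2 (not_lt.2 hlim)
  calc (⨆ f : K, L f) ≤ ((M * c' : ℝ) : EReal) := iSup_le fun f => key f f.2
    _ = (M : EReal) * (c' : EReal) := EReal.coe_mul M c'
    _ = (M : EReal) * c := by rw [hcc']
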